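/- Let f : ℝ → ℂ be continuous with |f(t)| ≤ M/((1+|t−s|)·log²(2+|t−s|)) for all t and some fixed s, M. Suppose g(t) = ∫ₛᵗ K(t−τ)f(τ)dτ where |K(u)| ≤ C|u|^{−(1−2/p)} for some p > 2. Then |g(t)| ≤ C'·|t−s|^{−(1−2/p)} for some constant C' depending only on C, M, p, i.e. sup_{t≠s} |t−s|^{1−2/p}|g(t)| < ∞. -/

import Mathlib

open Real MeasureTheory

set_option maxHeartbeats 1000000 in
/-- Auxiliary estimate: the oriented case `s < t`. -/
lemma stmt_19_aux (α : ℝ) (hα0 : 0 < α) (hα1 : α < 1) (s M C : ℝ) (hM : 0 ≤ M) (hC : 0 ≤ C)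
    (f : ℝ → ℂ) (hf : Continuous f)
    (hfdec : ∀ t : ℝ, ‖f t‖ ≤ M / ((1 + |t - s|) * (Real.log (2 + |t - s|))^2))
    (K : ℝ → ℂ) (hKmeas : Measurable K)
    (hK : ∀ u : ℝ, ‖K u‖ ≤ C * |u| ^ (-α))
    (t : ℝ) (ht : s < t) :
    ‖∫ τ in s..t, K (t - τ) * f τ‖ ≤
      C * M * (2:ℝ)^α * (2 / Real.log 2 + 1 / ((Real.log 2)^2 * (1 - α))) * (t - s) ^ (-α) := by
  have hl2 : 0 < Real.log 2 := Real.log_pos (by norm_num)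
  set r := t - s with hr_def
  have hr : 0 < r := by simp [hr_def]; linarith
  set m := s + r / 2 with hm_def
  have hsm : s ≤ m := by simp [hm_def]; linarith
  have hmt : m ≤ t := by simp [hm_def, hr_def]; linarith
  set F : ℝ → ℂ := fun τ => K (t - τ) * f τ with hF
  have hFmeas : Measurable F :=
    (hKmeas.comp (measurable_const.sub measurable_id)).mul hf.measurable
  -- basic positivity facts used below
  have hlogden : ∀ τ : ℝ, s ≤ τ → Real.log 2 ≤ Real.log (2 + (τ - s)) := by
    intro τ hτ
    exact Real.log_le_log (by norm_num) (by linarith)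
  -- pointwise bound
  have hbound : ∀ τ ∈ Set.Icc s t,
      ‖F τ‖ ≤ (C * (t - τ) ^ (-α)) * (M / ((1 + (τ - s)) * (Real.log (2 + (τ - s)))^2)) := by
    intro τ hτ
    have h1 : ‖K (t - τ)‖ ≤ C * (t - τ) ^ (-α) := by
      have := hK (t - τ)
      rwa [abs_of_nonneg (by linarith [hτ.2] : (0:ℝ) ≤ t - τ)] at this
    have h2 : ‖f τ‖ ≤ M / ((1 + (τ - s)) * (Real.log (2 + (τ - s)))^2) := by
      have := hfdec τ
      rwa [abs_of_nonneg (by linarith [hτ.1] : (0:ℝ) ≤ τ - s)] at this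
    calc ‖F τ‖ = ‖K (t - τ)‖ * ‖f τ‖ := norm_mul _ _
      _ ≤ (C * (t - τ) ^ (-α)) * (M / ((1 + (τ - s)) * (Real.log (2 + (τ - s)))^2)) :=
        mul_le_mul h1 h2 (norm_nonneg _) (le_trans (norm_nonneg _) h1)
  -- integrability of the kernel power on [m,t]
  have hInt2base : IntervalIntegrable (fun τ => (t - τ) ^ (-α)) volume m t := by
    have h := (intervalIntegral.intervalIntegrable_rpow' (a := t - m) (b := 0) (by linarith : (-1:ℝ) < -α)).comp_sub_left t
    simpa using h
  have hIntbase : IntervalIntegrable (fun τ => (t - τ) ^ (-α)) volume s t := by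
    have h := (intervalIntegral.intervalIntegrable_rpow' (a := t - s) (b := 0) (by linarith : (-1:ℝ) < -α)).comp_sub_left t
    simpa using h
  -- integrability of F on [s,t]
  have hFint : IntervalIntegrable F volume s t := by
    apply (hIntbase.const_mul (C * M / (Real.log 2)^2)).mono_fun'
      (hFmeas.aestronglyMeasurable.restrict)
    rw [Filter.EventuallyLE, ae_restrict_iff' measurableSet_uIoc]
    refine Filter.Eventually.of_forall ?_
    intro τ hτ
    rw [Set.uIoc_of_le ht.le] at hτ
    have hτ' : τ ∈ Set.Icc s t := ⟨hτ.1.le, hτ.2⟩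
    refine le_trans (hbound τ hτ') ?_
    have hden : (Real.log 2)^2 ≤ (1 + (τ - s)) * (Real.log (2 + (τ - s)))^2 := by
      have h1 : (1:ℝ) ≤ 1 + (τ - s) := by linarith [hτ'.1]
      have h2 : (Real.log 2)^2 ≤ (Real.log (2 + (τ - s)))^2 := by
        have := hlogden τ hτ'.1
        nlinarith [hl2]
      nlinarith [sq_nonneg (Real.log (2 + (τ - s)))]
    have hfb : M / ((1 + (τ - s)) * (Real.log (2 + (τ - s)))^2) ≤ M / (Real.log 2)^2 := by
      apply div_le_div_of_nonneg_left hM (by positivity) hden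
    have hpow : (0:ℝ) ≤ (t - τ) ^ (-α) := Real.rpow_nonneg (by linarith [hτ'.2]) _
    calc (C * (t - τ) ^ (-α)) * (M / ((1 + (τ - s)) * (Real.log (2 + (τ - s)))^2))
        ≤ (C * (t - τ) ^ (-α)) * (M / (Real.log 2)^2) :=
          mul_le_mul_of_nonneg_left hfb (by positivity)
      _ = C * M / (Real.log 2)^2 * (t - τ) ^ (-α) := by ring
  have hFint1 : IntervalIntegrable F volume s m :=
    hFint.mono_set' (by rw [Set.uIoc_of_le hsm, Set.uIoc_of_le ht.le]
                        exact Set.Ioc_subset_Ioc_right hmt)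
  have hFint2 : IntervalIntegrable F volume m t :=
    hFint.mono_set' (by rw [Set.uIoc_of_le hmt, Set.uIoc_of_le ht.le]
                        exact Set.Ioc_subset_Ioc_left hsm)
  -- Piece 1 : FTC antiderivative
  set φ : ℝ → ℝ := fun τ => -(Real.log (2 + (τ - s)))⁻¹ with hφ
  set φ' : ℝ → ℝ := fun τ => (2 + (τ - s))⁻¹ / (Real.log (2 + (τ - s)))^2 with hφ'
  have hderiv : ∀ τ ∈ Set.uIcc s m, HasDerivAt φ (φ' τ) τ := by
    intro τ hτ
    rw [Set.uIcc_of_le hsm] at hτ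
    have hpos : (0:ℝ) < 2 + (τ - s) := by linarith [hτ.1]
    have hlogpos : 0 < Real.log (2 + (τ - s)) := lt_of_lt_of_le hl2 (hlogden τ hτ.1)
    have hinner : HasDerivAt (fun τ : ℝ => 2 + (τ - s)) 1 τ := by
      simpa using ((hasDerivAt_id τ).sub_const s).const_add 2
    have hlog : HasDerivAt (fun τ : ℝ => Real.log (2 + (τ - s))) ((2 + (τ - s))⁻¹ * 1) τ :=
      by have h := (Real.hasDerivAt_log (ne_of_gt hpos)).comp τ hinner; exact h
    have : HasDerivAt (fun τ : ℝ => -(Real.log (2 + (τ - s)))⁻¹)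
        (-(-((2 + (τ - s))⁻¹ * 1) / Real.log (2 + (τ - s)) ^ 2)) τ := (hlog.inv (ne_of_gt hlogpos)).neg
    convert this using 1
    simp [hφ']
    field_simp
  have hφ'cont : ContinuousOn φ' (Set.uIcc s m) := by
    rw [Set.uIcc_of_le hsm]
    apply ContinuousOn.div
    · apply ContinuousOn.inv₀ (by fun_prop)
      intro τ hτ
      have h : (0:ℝ) < 2 + (τ - s) := by linarith [hτ.1]
      exact ne_of_gt h
    · apply ContinuousOn.pow
      apply Real.continuousOn_log.comp (by fun_prop)
      intro τ hτ
      have h : (0:ℝ) < 2 + (τ - s) := by linarith [hτ.1]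
      simp [Set.mem_compl_iff, ne_of_gt h]
    · intro τ hτ
      have hlogpos : 0 < Real.log (2 + (τ - s)) := lt_of_lt_of_le hl2 (hlogden τ hτ.1)
      positivity
  have hφ'int : IntervalIntegrable φ' volume s m := hφ'cont.intervalIntegrable
  have hFTC : ∫ τ in s..m, φ' τ = φ m - φ s :=
    intervalIntegral.integral_eq_sub_of_hasDerivAt hderiv hφ'int
  clear_value φ φ'
  have hhalf : (0:ℝ) < r / 2 := by linarith
  have hpiece1 : (∫ τ in s..m, ‖F τ‖) ≤ C * (r/2)^(-α) * (2*M) * (Real.log 2)⁻¹ := by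
    have hmono : (∫ τ in s..m, ‖F τ‖) ≤ ∫ τ in s..m, (C * (r/2)^(-α) * (2*M)) * φ' τ := by
      apply intervalIntegral.integral_mono_on hsm hFint1.norm (hφ'int.const_mul _)
      intro τ hτ
      have hτt : τ ∈ Set.Icc s t := ⟨hτ.1, le_trans hτ.2 hmt⟩
      refine le_trans (hbound τ hτt) ?_
      have hk : (t - τ) ^ (-α) ≤ (r/2) ^ (-α) := by
        apply Real.rpow_le_rpow_of_nonpos hhalf (by simp [hm_def] at hτ; linarith [hτ.2]) (by linarith)
      have hlogpos : 0 < Real.log (2 + (τ - s)) := lt_of_lt_of_le hl2 (hlogden τ hτ.1)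
      have h1 : (0:ℝ) ≤ τ - s := by linarith [hτ.1]
      have hposτ : (0:ℝ) < 2 + (τ - s) := by linarith
      have hfb : M / ((1 + (τ - s)) * (Real.log (2 + (τ - s)))^2) ≤ (2*M) * φ' τ := by
        have hrw : (2*M) * φ' τ = (2*M) / ((2 + (τ - s)) * (Real.log (2 + (τ - s)))^2) := by
          simp only [hφ']
          field_simp
        rw [hrw, div_le_div_iff₀ (by positivity) (by positivity)]
        nlinarith [sq_nonneg (Real.log (2 + (τ - s))), mul_nonneg hM h1,
          mul_nonneg (mul_nonneg hM h1) (sq_nonneg (Real.log (2 + (τ - s))))]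
      have hφ'pos : 0 ≤ φ' τ := by
        simp only [hφ']
        exact div_nonneg (inv_nonneg.mpr hposτ.le) (sq_nonneg _)
      calc (C * (t - τ) ^ (-α)) * (M / ((1 + (τ - s)) * (Real.log (2 + (τ - s)))^2))
          ≤ (C * (r/2) ^ (-α)) * ((2*M) * φ' τ) := by
            apply mul_le_mul (mul_le_mul_of_nonneg_left hk hC) hfb (by positivity) (by positivity)
        _ = (C * (r/2)^(-α) * (2*M)) * φ' τ := by ring
    refine le_trans hmono ?_
    rw [intervalIntegral.integral_const_mul, hFTC]
    have hφs : φ s = -(Real.log 2)⁻¹ := by simp [hφ]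
    have hφm : φ m ≤ 0 := by
      simp only [hφ, neg_nonpos]
      have h : 0 < Real.log (2 + (m - s)) := lt_of_lt_of_le hl2 (hlogden m hsm)
      exact inv_nonneg.mpr h.le
    have hcoef : 0 ≤ C * (r/2)^(-α) * (2*M) := by positivity
    have : φ m - φ s ≤ (Real.log 2)⁻¹ := by rw [hφs]; linarith
    calc C * (r/2)^(-α) * (2*M) * (φ m - φ s)
        ≤ C * (r/2)^(-α) * (2*M) * (Real.log 2)⁻¹ := mul_le_mul_of_nonneg_left this hcoef
      _ = C * (r/2)^(-α) * (2*M) * (Real.log 2)⁻¹ := rfl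
  -- Piece 2
  have hcomp : (∫ τ in m..t, (t - τ) ^ (-α)) = ∫ u in (0:ℝ)..(r/2), u ^ (-α) := by
    have h := intervalIntegral.integral_comp_sub_left (a := m) (b := t) (fun u => u ^ (-α)) t
    rw [h]
    congr 1
    · ring
    · simp [hm_def, hr_def]; ring
  have hval : (∫ u in (0:ℝ)..(r/2), u ^ (-α)) = (r/2)^(1-α) / (1-α) := by
    rw [show (∫ u in (0:ℝ)..(r/2), u ^ (-α)) = ((r/2) ^ (-α + 1) - (0:ℝ) ^ (-α + 1)) / (-α + 1) from
      _root_.integral_rpow (Or.inl (by linarith : (-1:ℝ) < -α))]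
    rw [Real.zero_rpow (ne_of_gt (by linarith : (0:ℝ) < -α + 1))]
    rw [show -α + 1 = 1 - α from by ring]
    ring
  have hpiece2 : (∫ τ in m..t, ‖F τ‖) ≤
      C * (2*M / (r * (Real.log 2)^2)) * ((r/2)^(1-α) / (1-α)) := by
    have hmono : (∫ τ in m..t, ‖F τ‖) ≤
        ∫ τ in m..t, (C * (2*M / (r * (Real.log 2)^2))) * (t - τ) ^ (-α) := by
      apply intervalIntegral.integral_mono_on hmt hFint2.norm (hInt2base.const_mul _)
      intro τ hτ
      have hτt : τ ∈ Set.Icc s t := ⟨le_trans hsm hτ.1, hτ.2⟩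
      refine le_trans (hbound τ hτt) ?_
      have hτs : r/2 ≤ τ - s := by simp [hm_def] at hτ; linarith [hτ.1]
      have hlogpos : 0 < Real.log (2 + (τ - s)) := lt_of_lt_of_le hl2 (hlogden τ hτt.1)
      have hfb : M / ((1 + (τ - s)) * (Real.log (2 + (τ - s)))^2) ≤ 2*M / (r * (Real.log 2)^2) := by
        rw [div_le_div_iff₀ (mul_pos (by linarith [hτt.1] : (0:ℝ) < 1 + (τ - s)) (pow_pos hlogpos 2))
          (mul_pos hr (pow_pos hl2 2))]
        have h2 : (Real.log 2)^2 ≤ (Real.log (2 + (τ - s)))^2 := by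
          have := hlogden τ hτt.1
          nlinarith [hl2]
        nlinarith [mul_nonneg hM (sq_nonneg (Real.log 2)), hl2,
          mul_le_mul_of_nonneg_left h2 hM]
      have hpow : (0:ℝ) ≤ (t - τ) ^ (-α) := Real.rpow_nonneg (by linarith [hτ.2]) _
      calc (C * (t - τ) ^ (-α)) * (M / ((1 + (τ - s)) * (Real.log (2 + (τ - s)))^2))
          ≤ (C * (t - τ) ^ (-α)) * (2*M / (r * (Real.log 2)^2)) :=
            mul_le_mul_of_nonneg_left hfb (by positivity)
        _ = (C * (2*M / (r * (Real.log 2)^2))) * (t - τ) ^ (-α) := by ring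
    refine le_trans hmono ?_
    rw [intervalIntegral.integral_const_mul, hcomp, hval]
  -- Combine
  have hnorm : ‖∫ τ in s..t, F τ‖ ≤ ∫ τ in s..t, ‖F τ‖ :=
    intervalIntegral.norm_integral_le_integral_norm ht.le
  have hsplit : (∫ τ in s..t, ‖F τ‖) = (∫ τ in s..m, ‖F τ‖) + ∫ τ in m..t, ‖F τ‖ :=
    (intervalIntegral.integral_add_adjacent_intervals hFint1.norm hFint2.norm).symm
  have e1 : (r/2) ^ (-α) = r ^ (-α) * 2 ^ α := by
    rw [Real.div_rpow hr.le (by norm_num : (0:ℝ) ≤ 2), div_eq_mul_inv,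
      ← Real.rpow_neg (by norm_num : (0:ℝ) ≤ 2), neg_neg]
  have e2 : (r/2) ^ (1-α) = (r/2) * (r ^ (-α) * 2 ^ α) := by
    rw [show (1:ℝ) - α = 1 + -α from by ring, Real.rpow_add hhalf, Real.rpow_one, e1]
  calc ‖∫ τ in s..t, F τ‖ ≤ (∫ τ in s..m, ‖F τ‖) + ∫ τ in m..t, ‖F τ‖ := by
        rw [← hsplit]; exact hnorm
    _ ≤ C * (r/2)^(-α) * (2*M) * (Real.log 2)⁻¹
        + C * (2*M / (r * (Real.log 2)^2)) * ((r/2)^(1-α) / (1-α)) := add_le_add hpiece1 hpiece2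
    _ = C * M * (2:ℝ)^α * (2 / Real.log 2 + 1 / ((Real.log 2)^2 * (1 - α))) * r ^ (-α) := by
        rw [e1, e2]
        have h1α : (1:ℝ) - α ≠ 0 := by intro h; nlinarith
        field_simp

theorem stmt_19 (p : ℝ) (hp : 2 < p) (s M C : ℝ)
    (f : ℝ → ℂ) (hf : Continuous f)
    (hfdec : ∀ t : ℝ, ‖f t‖ ≤ M / ((1 + |t - s|) * (Real.log (2 + |t - s|))^2))
    (K : ℝ → ℂ) (hKmeas : Measurable K)
    (hK : ∀ u : ℝ, ‖K u‖ ≤ C * |u| ^ (-(1 - 2/p)))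
    (g : ℝ → ℂ) (hg : ∀ t : ℝ, g t = ∫ τ in s..t, K (t - τ) * f τ) :
    ∃ C' : ℝ, ∀ t : ℝ, t ≠ s → ‖g t‖ ≤ C' * |t - s| ^ (-(1 - 2/p)) := by
  have hp0 : 0 < p := by linarith
  set α := 1 - 2/p with hα_def
  have hα0 : 0 < α := by
    have : 2/p < 1 := (div_lt_one hp0).mpr hp
    simp [hα_def]; linarith
  have hα1 : α < 1 := by
    have : 0 < 2/p := by positivity
    simp [hα_def]; linarith
  have hl2 : 0 < Real.log 2 := Real.log_pos (by norm_num)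
  have hC : 0 ≤ C := by
    have h1 := hK 1
    rw [abs_one, Real.one_rpow, mul_one] at h1
    exact le_trans (norm_nonneg _) h1
  have hM : 0 ≤ M := by
    have h0 := le_trans (norm_nonneg (f s)) (hfdec s)
    simp only [sub_self, abs_zero, add_zero, one_mul] at h0
    have hd : (0:ℝ) < (Real.log 2)^2 := pow_pos hl2 2
    have := (le_div_iff₀ hd).mp h0
    simpa using this
  refine ⟨C * M * (2:ℝ)^α * (2 / Real.log 2 + 1 / ((Real.log 2)^2 * (1 - α))), ?_⟩
  intro t hts
  rcases lt_or_gt_of_ne hts with hlt | hgt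
  · -- t < s : reflect
    set t' := 2*s - t with ht'_def
    have ht' : s < t' := by simp [ht'_def]; linarith
    set K' : ℝ → ℂ := fun u => K (-u) with hK'
    set f' : ℝ → ℂ := fun τ => f (2*s - τ) with hf'
    have hrefl : (∫ τ in s..t, K (t - τ) * f τ) = - ∫ σ in s..t', K' (t' - σ) * f' σ := by
      have hpt : ∀ τ : ℝ, K (t - τ) * f τ = (fun σ => K' (t' - σ) * f' σ) (2*s - τ) := by
        intro τ
        simp only [hK', hf']
        have harg : -(t' - (2*s - τ)) = t - τ := by rw [ht'_def]; ring
        rw [harg]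
        congr 2
        ring
      calc (∫ τ in s..t, K (t - τ) * f τ)
          = ∫ τ in s..t, (fun σ => K' (t' - σ) * f' σ) (2*s - τ) := by
            apply intervalIntegral.integral_congr
            intro τ _; exact hpt τ
        _ = ∫ σ in (2*s - t)..(2*s - s), K' (t' - σ) * f' σ :=
            intervalIntegral.integral_comp_sub_left (fun σ => K' (t' - σ) * f' σ) (2*s)
        _ = ∫ σ in t'..s, K' (t' - σ) * f' σ := by rw [ht'_def, show 2*s - s = s by ring]
        _ = - ∫ σ in s..t', K' (t' - σ) * f' σ := (intervalIntegral.integral_symm _ _)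
    have hbound := stmt_19_aux α hα0 hα1 s M C hM hC f'
      (hf.comp (continuous_const.sub continuous_id))
      (fun τ => by
        have h := hfdec (2*s - τ)
        have e : |2*s - τ - s| = |τ - s| := by
          rw [show 2*s - τ - s = -(τ - s) by ring, abs_neg]
        rw [e] at h
        simpa [hf'] using h)
      K' (hKmeas.comp measurable_neg)
      (fun u => by simpa [hK', abs_neg] using hK (-u))
      t' ht'
    rw [hg t, hrefl, norm_neg]
    have habs : |t - s| = t' - s := by
      rw [abs_of_neg (by linarith : t - s < 0), ht'_def]; ring
    rw [habs]
    exact hbound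
  · -- s < t : direct
    have hbound := stmt_19_aux α hα0 hα1 s M C hM hC f hf hfdec K hKmeas hK t hgt
    rw [hg t]
    have habs : |t - s| = t - s := abs_of_pos (by linarith)
    rw [habs]
    exact hbound
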